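/- With the notation below, λ = ker(π₁) ∩ ker(π₂) ∩ ker(π_β) as subspaces of p₅, where λ := ⁅[X_{1β}],[X_{2β}]⁆ is the Lie ideal of the subalgebra f₃ ⊂ p₅ spanned by brackets of the Lie ideals of f₃ generated by X_{1β} and by X_{2β}. -/

import Mathlib

open scoped BigOperators

/-- The set of strand labels `S = {α, 1, 2, β, ω}` (with `n = 2`). -/
inductive Strand : Type
  | alpha : Strand
  | one : Strand
  | two : Strand
  | beta : Strand
  | omega : Strand
  deriving DecidableEq

instance : Fintype Strand where
  elems := {Strand.alpha, Strand.one, Strand.two, Strand.beta, Strand.omega}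
  complete := fun x => by cases x <;> simp

/-- The free Lie algebra on the generators `X_{ab}`, `a, b ∈ S`, for a label set `S`. -/
abbrev FL (S : Type) : Type := FreeLieAlgebra ℂ (S × S)

noncomputable def XF (S : Type) (a b : S) : FL S := FreeLieAlgebra.of ℂ (a, b)

/-- The defining relations of the Lie algebra of infinitesimal spherical pure braids on the
label set `S`: the diagonal generators `X_{aa}` (we present the algebra using generators
indexed by all ordered pairs, so these are set to zero), the symmetry relations
`X_{ab} = X_{ba}`, the linear relations `Σ_{b ≠ a} X_{ab} = 0`, and the commutation
relations `[X_{ab}, X_{cd}] = 0` for `a, b, c, d` pairwise distinct. -/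
noncomputable def pRel (S : Type) [Fintype S] [DecidableEq S] : Set (FL S) :=
  {w | ∃ a, w = XF S a a} ∪
  {w | ∃ a b, w = XF S a b - XF S b a} ∪
  {w | ∃ a, w = ∑ b ∈ Finset.univ.filter (fun b => b ≠ a), XF S a b} ∪
  {w | ∃ a b c d, a ≠ b ∧ a ≠ c ∧ a ≠ d ∧ b ≠ c ∧ b ≠ d ∧ c ≠ d ∧
    w = ⁅XF S a b, XF S c d⁆}

noncomputable def pIdeal (S : Type) [Fintype S] [DecidableEq S] : LieIdeal ℂ (FL S) :=
  LieSubmodule.lieSpan ℂ (FL S) (pRel S)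

/-- The Lie algebra of infinitesimal spherical pure braids on the label set `S`. -/
abbrev P (S : Type) [Fintype S] [DecidableEq S] : Type := FL S ⧸ pIdeal S

/-- The image `X_{ab}` of a generator. -/
noncomputable def X (S : Type) [Fintype S] [DecidableEq S] (a b : S) : P S :=
  LieSubmodule.Quotient.mk (N := pIdeal S) (XF S a b)

/-- `p₅`, on the label set `S = {α, 1, 2, β, ω}`. -/
abbrev P5 : Type := P Strand

/-- `p₄` on the label set `S ∖ {t}`. -/
abbrev P4 (t : Strand) : Type := P {s : Strand // s ≠ t}

/-- `X_{βω} := X_{α1} + X_{α2} + X_{12}` in `p₅`. -/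
noncomputable def Xbw : P5 :=
  X Strand Strand.alpha Strand.one + X Strand Strand.alpha Strand.two +
    X Strand Strand.one Strand.two

/-- The Lie subalgebra `f₃ ⊂ p₅` generated by `X_{1β}`, `X_{2β}`, `X_{βω}`. -/
noncomputable def f3Sub : LieSubalgebra ℂ P5 :=
  LieSubalgebra.lieSpan ℂ P5
    {X Strand Strand.one Strand.beta, X Strand Strand.two Strand.beta, Xbw}

/-- `X_{1β}` and `X_{2β}` as elements of `f₃`. -/
noncomputable def X1b : ↥f3Sub :=
  ⟨X Strand Strand.one Strand.beta,
    LieSubalgebra.subset_lieSpan (Set.mem_insert _ _)⟩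

noncomputable def X2b : ↥f3Sub :=
  ⟨X Strand Strand.two Strand.beta,
    LieSubalgebra.subset_lieSpan (Set.mem_insert_of_mem _ (Set.mem_insert _ _))⟩

/-- The Lie ideal `λ := ⁅[X_{1β}],[X_{2β}]⁆` of the subalgebra `f₃ ⊂ p₅`. -/
noncomputable def lam : LieIdeal ℂ ↥f3Sub :=
  ⁅(LieSubmodule.lieSpan ℂ ↥f3Sub {X1b} : LieIdeal ℂ ↥f3Sub),
    (LieSubmodule.lieSpan ℂ ↥f3Sub {X2b} : LieIdeal ℂ ↥f3Sub)⁆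

section Generic

variable {S : Type} [Fintype S] [DecidableEq S]
variable {L : Type*} [LieRing L] [LieAlgebra ℂ L]

/-- The quotient map as a morphism of Lie algebras. -/
noncomputable def mkL {L : Type*} [LieRing L] [LieAlgebra ℂ L] (I : LieIdeal ℂ L) :
    L →ₗ⁅ℂ⁆ L ⧸ I :=
  { I.toSubmodule.mkQ with map_lie' := rfl }

lemma mkL_apply {L : Type*} [LieRing L] [LieAlgebra ℂ L] (I : LieIdeal ℂ L) (w : L) :
    mkL I w = LieSubmodule.Quotient.mk (N := I) w := rfl

lemma mkL_surjective {L : Type*} [LieRing L] [LieAlgebra ℂ L] (I : LieIdeal ℂ L) :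
    Function.Surjective (mkL I) :=
  Submodule.Quotient.mk_surjective _

lemma mkL_eq_zero {L : Type*} [LieRing L] [LieAlgebra ℂ L] (I : LieIdeal ℂ L) {w : L} :
    mkL I w = 0 ↔ w ∈ I :=
  Submodule.Quotient.mk_eq_zero I.toSubmodule

lemma X_eq (a b : S) : X S a b = mkL (pIdeal S) (XF S a b) := rfl

lemma rel_mem {w : FL S} (h : w ∈ pRel S) : w ∈ pIdeal S :=
  LieSubmodule.subset_lieSpan h

lemma rel_zero {w : FL S} (h : w ∈ pRel S) : mkL (pIdeal S) w = 0 :=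
  (mkL_eq_zero _).2 (rel_mem h)

lemma X_diag (a : S) : X S a a = 0 :=
  rel_zero (Or.inl (Or.inl (Or.inl ⟨a, rfl⟩)))

lemma X_symm (a b : S) : X S a b = X S b a := by
  have h : XF S a b - XF S b a ∈ (pIdeal S).toSubmodule :=
    rel_mem (Or.inl (Or.inl (Or.inr ⟨a, b, rfl⟩)))
  exact (Submodule.Quotient.eq (pIdeal S).toSubmodule).2 h

lemma X_sum (a : S) :
    ∑ b ∈ Finset.univ.filter (fun b => b ≠ a), X S a b = 0 := by
  have h := rel_zero (S := S) (Or.inl (Or.inr ⟨a, rfl⟩))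
  rw [show (mkL (pIdeal S) : FL S → P S)
      = ((pIdeal S).toSubmodule.mkQ : FL S →ₗ[ℂ] P S) from rfl] at h
  rw [map_sum] at h
  exact h

lemma X_comm {a b c d : S} (h1 : a ≠ b) (h2 : a ≠ c) (h3 : a ≠ d) (h4 : b ≠ c)
    (h5 : b ≠ d) (h6 : c ≠ d) : ⁅X S a b, X S c d⁆ = 0 := by
  have h := rel_zero (S := S) (Or.inr ⟨a, b, c, d, h1, h2, h3, h4, h5, h6, rfl⟩)
  rw [LieHom.map_lie] at h
  exact h

/-- Extensionality for morphisms out of the free Lie algebra. -/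
lemma FL_ext {I : Type} {f g : FreeLieAlgebra ℂ I →ₗ⁅ℂ⁆ L}
    (h : ∀ i, f (FreeLieAlgebra.of ℂ i) = g (FreeLieAlgebra.of ℂ i)) : f = g :=
  (FreeLieAlgebra.lift ℂ).symm.injective (funext h)

/-- Extensionality for morphisms out of `P S`. -/
lemma P_ext {f g : P S →ₗ⁅ℂ⁆ L} (h : ∀ a b, f (X S a b) = g (X S a b)) : f = g := by
  have key : f.comp (mkL (pIdeal S)) = g.comp (mkL (pIdeal S)) :=
    FL_ext (fun p => h p.1 p.2)
  ext u
  obtain ⟨w, rfl⟩ := mkL_surjective (pIdeal S) u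
  exact LieHom.congr_fun key w

/-- Every element of a free Lie algebra lies in the Lie span of the generators. -/
lemma FL_gen {I : Type} (u : FreeLieAlgebra ℂ I) :
    u ∈ LieSubalgebra.lieSpan ℂ (FreeLieAlgebra ℂ I) (Set.range (FreeLieAlgebra.of ℂ)) := by
  set N := LieSubalgebra.lieSpan ℂ (FreeLieAlgebra ℂ I) (Set.range (FreeLieAlgebra.of ℂ)) with hN
  let h : FreeLieAlgebra ℂ I →ₗ⁅ℂ⁆ ↥N :=
    FreeLieAlgebra.lift ℂ (fun i =>
      (⟨FreeLieAlgebra.of ℂ i, LieSubalgebra.subset_lieSpan ⟨i, rfl⟩⟩ : ↥N))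
  have key : N.incl.comp h = LieHom.id := by
    apply FL_ext
    intro i
    simp only [LieHom.comp_apply, LieHom.id_apply, h, FreeLieAlgebra.lift_of_apply]
    rfl
  have h2 : N.incl (h u) = u := LieHom.congr_fun key u
  rw [← h2]
  exact (h u).2

/-- Every element of `P S` lies in the Lie span of the `X a b`. -/
lemma P_gen (u : P S) :
    u ∈ LieSubalgebra.lieSpan ℂ (P S) {w | ∃ a b, w = X S a b} := by
  set N := LieSubalgebra.lieSpan ℂ (P S) {w | ∃ a b, w = X S a b} with hN
  obtain ⟨w, rfl⟩ := mkL_surjective (pIdeal S) u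
  have hv := FL_gen (I := S × S) w
  refine LieSubalgebra.lieSpan_induction (R := ℂ)
    (p := fun v _ => mkL (pIdeal S) v ∈ N) ?_ ?_ ?_ ?_ ?_ hv
  · rintro _ ⟨p, rfl⟩
    exact LieSubalgebra.subset_lieSpan ⟨p.1, p.2, rfl⟩
  · simpa using N.zero_mem
  · intro x y _ _ hx hy
    rw [map_add]
    exact N.add_mem hx hy
  · intro r x _ hx
    rw [map_smul]
    exact N.smul_mem r hx
  · intro x y _ _ hx hy
    rw [LieHom.map_lie]
    exact N.lie_mem hx hy

/-- Sum splitting. -/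
lemma sum_split {M : Type*} [AddCommGroup M] (g : S → M) (c : S) :
    ∑ b ∈ Finset.univ.filter (fun b => b ≠ c), g b = (∑ b, g b) - g c := by
  rw [Finset.filter_ne', Finset.sum_erase_eq_sub (Finset.mem_univ c)]

/-- Total sum of a row is zero (using the diagonal relation). -/
lemma X_sum_total (a : S) : ∑ b, X S a b = 0 := by
  have h := X_sum a
  rw [sum_split] at h
  rw [X_diag] at h
  simpa using h

lemma sum_subtype_all {M : Type*} [AddCommGroup M] (t : S) (F : S → M) :
    ∑ b : {s : S // s ≠ t}, F ↑b = (∑ s, F s) - F t := by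
  rw [← sum_split]
  exact (Finset.sum_subtype _ (by simp) F).symm

end Generic
section PHom

variable {S : Type} [Fintype S] [DecidableEq S]
variable {L : Type*} [LieRing L] [LieAlgebra ℂ L]

lemma LieHom_sub {L' : Type*} [LieRing L'] [LieAlgebra ℂ L'] (g : L →ₗ⁅ℂ⁆ L') (x y : L) :
    g (x - y) = g x - g y := g.toLinearMap.map_sub x y

lemma LieHom_sum {L' : Type*} [LieRing L'] [LieAlgebra ℂ L'] (g : L →ₗ⁅ℂ⁆ L')
    {ι : Type*} (s : Finset ι) (F : ι → L) :
    g (∑ i ∈ s, F i) = ∑ i ∈ s, g (F i) := map_sum g.toLinearMap F s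

lemma PHom_ker (f : S × S → L) (h : ∀ r ∈ pRel S, FreeLieAlgebra.lift ℂ f r = 0) :
    (pIdeal S).toSubmodule ≤ LinearMap.ker (FreeLieAlgebra.lift ℂ f).toLinearMap := by
  intro w hw
  rw [LinearMap.mem_ker]
  have : pIdeal S ≤ (FreeLieAlgebra.lift ℂ f).ker := by
    apply LieSubmodule.lieSpan_le.2
    intro r hr
    exact LieHom.mem_ker.2 (h r hr)
  exact LieHom.mem_ker.1 (this hw)

/-- Lifting a relation-compatible map to a morphism out of `P S`. -/
noncomputable def PHom (f : S × S → L) (h : ∀ r ∈ pRel S, FreeLieAlgebra.lift ℂ f r = 0) :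
    P S →ₗ⁅ℂ⁆ L where
  toLinearMap := Submodule.liftQ _ _ (PHom_ker f h)
  map_lie' := by
    intro u v
    obtain ⟨x, rfl⟩ := mkL_surjective (pIdeal S) u
    obtain ⟨y, rfl⟩ := mkL_surjective (pIdeal S) v
    have e : ∀ w : FL S,
        Submodule.liftQ _ _ (PHom_ker f h) (mkL (pIdeal S) w) = FreeLieAlgebra.lift ℂ f w :=
      fun w => rfl
    show Submodule.liftQ _ _ (PHom_ker f h) ⁅mkL (pIdeal S) x, mkL (pIdeal S) y⁆ =
      ⁅Submodule.liftQ _ _ (PHom_ker f h) (mkL (pIdeal S) x),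
        Submodule.liftQ _ _ (PHom_ker f h) (mkL (pIdeal S) y)⁆
    rw [show ⁅mkL (pIdeal S) x, mkL (pIdeal S) y⁆ = mkL (pIdeal S) ⁅x, y⁆ from rfl]
    rw [e, e, e, LieHom.map_lie]

lemma PHom_mk (f : S × S → L) (h : ∀ r ∈ pRel S, FreeLieAlgebra.lift ℂ f r = 0) (w : FL S) :
    PHom f h (mkL (pIdeal S) w) = FreeLieAlgebra.lift ℂ f w := rfl

lemma PHom_X (f : S × S → L) (h : ∀ r ∈ pRel S, FreeLieAlgebra.lift ℂ f r = 0) (a b : S) :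
    PHom f h (X S a b) = f (a, b) := by
  rw [X_eq, PHom_mk]
  exact FreeLieAlgebra.lift_of_apply f (a, b)

lemma pRel_check (f : S × S → L)
    (h1 : ∀ a, f (a, a) = 0)
    (h2 : ∀ a b, f (a, b) = f (b, a))
    (h3 : ∀ a, ∑ b ∈ Finset.univ.filter (fun b => b ≠ a), f (a, b) = 0)
    (h4 : ∀ a b c d : S, a ≠ b → a ≠ c → a ≠ d → b ≠ c → b ≠ d → c ≠ d →
      ⁅f (a, b), f (c, d)⁆ = 0) :
    ∀ r ∈ pRel S, FreeLieAlgebra.lift ℂ f r = 0 := by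
  rintro r (((⟨a, rfl⟩ | ⟨a, b, rfl⟩) | ⟨a, rfl⟩) | ⟨a, b, c, d, hab, hac, had, hbc, hbd, hcd, rfl⟩)
  · rw [XF, FreeLieAlgebra.lift_of_apply]; exact h1 a
  · rw [LieHom_sub, XF, XF, FreeLieAlgebra.lift_of_apply, FreeLieAlgebra.lift_of_apply,
      sub_eq_zero]
    exact h2 a b
  · rw [LieHom_sum]
    simp only [XF, FreeLieAlgebra.lift_of_apply]
    exact h3 a
  · rw [LieHom.map_lie, XF, XF, FreeLieAlgebra.lift_of_apply, FreeLieAlgebra.lift_of_apply]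
    exact h4 a b c d hab hac had hbc hbd hcd

end PHom

section StrandLemmas

open Strand

lemma strand_sum {M : Type*} [AddCommMonoid M] (g : Strand → M) :
    ∑ s, g s = g alpha + g one + g two + g beta + g omega := by
  show ∑ s ∈ (Finset.univ : Finset Strand), g s = _
  rw [show (Finset.univ : Finset Strand) = {alpha, one, two, beta, omega} from by decide]
  rw [Finset.sum_insert (by decide), Finset.sum_insert (by decide),
    Finset.sum_insert (by decide), Finset.sum_insert (by decide), Finset.sum_singleton]
  simp only [add_assoc]

lemma R5 (a : Strand) :
    X Strand a alpha + X Strand a one + X Strand a two + X Strand a beta + X Strand a omega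
      = 0 := by
  have h := X_sum_total (S := Strand) a
  rwa [strand_sum] at h

lemma Xbw_eq : Xbw = X Strand beta omega := by
  have hα := R5 alpha
  have h1 := R5 one
  have h2 := R5 two
  have hβ := R5 beta
  have hω := R5 omega
  rw [X_diag] at hα h1 h2 hβ hω
  rw [X_symm (S := Strand) one alpha] at h1
  rw [X_symm (S := Strand) two alpha, X_symm (S := Strand) two one] at h2
  rw [X_symm (S := Strand) beta alpha, X_symm (S := Strand) beta one, X_symm (S := Strand) beta two] at hβ
  rw [X_symm (S := Strand) omega alpha, X_symm (S := Strand) omega one, X_symm (S := Strand) omega two,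
    X_symm (S := Strand) omega beta] at hω
  simp only [zero_add, add_zero] at hα h1 h2 hβ hω
  have key : Xbw - X Strand beta omega =
      ((1 : ℂ)/2) • ((X Strand alpha one + X Strand alpha two + X Strand alpha beta +
          X Strand alpha omega) +
        (X Strand alpha one + X Strand one two + X Strand one beta + X Strand one omega) +
        (X Strand alpha two + X Strand one two + X Strand two beta + X Strand two omega)) -
      ((1 : ℂ)/2) • ((X Strand alpha beta + X Strand one beta + X Strand two beta +
          X Strand beta omega) +
        (X Strand alpha omega + X Strand one omega + X Strand two omega +
          X Strand beta omega)) := by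
    rw [Xbw]
    module
  rw [hα, h1, h2, hβ, hω] at key
  simp only [add_zero, zero_add, smul_zero, sub_zero, zero_sub, neg_zero] at key
  exact sub_eq_zero.mp key

end StrandLemmas
section F3
open Strand

lemma mx : X Strand one beta ∈ f3Sub := LieSubalgebra.subset_lieSpan (Set.mem_insert _ _)
lemma my : X Strand two beta ∈ f3Sub :=
  LieSubalgebra.subset_lieSpan (Set.mem_insert_of_mem _ (Set.mem_insert _ _))
lemma mz : Xbw ∈ f3Sub :=
  LieSubalgebra.subset_lieSpan (Set.mem_insert_of_mem _ (Set.mem_insert_of_mem _ rfl))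
lemma mzw : X Strand beta omega ∈ f3Sub := Xbw_eq ▸ mz
lemma mzw' : X Strand omega beta ∈ f3Sub := by
  rw [← X_symm (S := Strand) beta omega]; exact mzw
lemma mx' : X Strand beta one ∈ f3Sub := by
  rw [← X_symm (S := Strand) one beta]; exact mx
lemma my' : X Strand beta two ∈ f3Sub := by
  rw [← X_symm (S := Strand) two beta]; exact my

/- Normalized sum relations in `P5`. -/
lemma Rα5 : X Strand alpha one + X Strand alpha two + X Strand alpha beta +
    X Strand alpha omega = 0 := by
  have h := R5 alpha; rw [X_diag] at h; simpa using h

lemma R15 : X Strand alpha one + X Strand one two + X Strand one beta +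
    X Strand one omega = 0 := by
  have h := R5 one
  rw [X_diag, X_symm (S := Strand) one alpha] at h; simpa using h

lemma R25 : X Strand alpha two + X Strand one two + X Strand two beta +
    X Strand two omega = 0 := by
  have h := R5 two
  rw [X_diag, X_symm (S := Strand) two alpha, X_symm (S := Strand) two one] at h
  simpa using h

lemma Rβ5 : X Strand alpha beta + X Strand one beta + X Strand two beta +
    X Strand beta omega = 0 := by
  have h := R5 beta
  rw [X_diag, X_symm (S := Strand) beta alpha, X_symm (S := Strand) beta one,
    X_symm (S := Strand) beta two] at h
  simpa using h

lemma Rω5 : X Strand alpha omega + X Strand one omega + X Strand two omega +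
    X Strand beta omega = 0 := by
  have h := R5 omega
  rw [X_diag, X_symm (S := Strand) omega alpha, X_symm (S := Strand) omega one,
    X_symm (S := Strand) omega two, X_symm (S := Strand) omega beta] at h
  simpa using h

/- Solved forms. -/
lemma e_ab : X Strand alpha beta =
    -(X Strand one beta + X Strand two beta + Xbw) := by
  rw [Xbw_eq]
  exact eq_neg_of_add_eq_zero_left (by rw [← Rβ5]; abel)

lemma mab : X Strand alpha beta ∈ f3Sub := by
  rw [e_ab]; exact neg_mem (add_mem (add_mem mx my) mz)
lemma mab' : X Strand beta alpha ∈ f3Sub := by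
  rw [← X_symm (S := Strand) alpha beta]; exact mab

lemma e_a1 : X Strand alpha one =
    -(X Strand alpha two + X Strand alpha beta + X Strand alpha omega) :=
  eq_neg_of_add_eq_zero_left (by rw [← Rα5]; abel)

lemma e_a2 : X Strand alpha two =
    -(X Strand alpha one + X Strand alpha beta + X Strand alpha omega) :=
  eq_neg_of_add_eq_zero_left (by rw [← Rα5]; abel)

lemma e_aw : X Strand alpha omega =
    -(X Strand alpha one + X Strand alpha two + X Strand alpha beta) :=
  eq_neg_of_add_eq_zero_left (by rw [← Rα5]; abel)

lemma e_12_2 : X Strand one two =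
    -(X Strand alpha two + X Strand two beta + X Strand two omega) :=
  eq_neg_of_add_eq_zero_left (by rw [← R25]; abel)

lemma e_12_1 : X Strand one two =
    -(X Strand alpha one + X Strand one beta + X Strand one omega) :=
  eq_neg_of_add_eq_zero_left (by rw [← R15]; abel)

lemma e_1w_w : X Strand one omega =
    -(X Strand alpha omega + X Strand two omega + X Strand beta omega) :=
  eq_neg_of_add_eq_zero_left (by rw [← Rω5]; abel)

lemma e_2w_w : X Strand two omega =
    -(X Strand alpha omega + X Strand one omega + X Strand beta omega) :=
  eq_neg_of_add_eq_zero_left (by rw [← Rω5]; abel)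

lemma e_1w_1 : X Strand one omega =
    -(X Strand alpha one + X Strand one two + X Strand one beta) :=
  eq_neg_of_add_eq_zero_left (by rw [← R15]; abel)

lemma e_2w_2 : X Strand two omega =
    -(X Strand alpha two + X Strand one two + X Strand two beta) :=
  eq_neg_of_add_eq_zero_left (by rw [← R25]; abel)

/- Bracket computations with the generator `X1β`. -/
lemma hαβx : ⁅X Strand alpha beta, X Strand one beta⁆ ∈ f3Sub := by
  rw [e_ab, neg_lie, add_lie, add_lie, lie_self, zero_add]
  exact neg_mem (add_mem (f3Sub.lie_mem my mx) (f3Sub.lie_mem mz mx))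

lemma hα1x : ⁅X Strand alpha one, X Strand one beta⁆ ∈ f3Sub := by
  rw [e_a1, neg_lie, add_lie, add_lie,
    X_comm (S := Strand) (by decide) (by decide) (by decide) (by decide) (by decide) (by decide),
    X_comm (S := Strand) (a := Strand.alpha) (b := Strand.omega) (c := Strand.one) (d := Strand.beta) (by decide) (by decide) (by decide) (by decide) (by decide) (by decide),
    zero_add, add_zero]
  exact neg_mem hαβx

lemma h12x : ⁅X Strand one two, X Strand one beta⁆ ∈ f3Sub := by
  rw [e_12_2, neg_lie, add_lie, add_lie,
    X_comm (S := Strand) (by decide) (by decide) (by decide) (by decide) (by decide) (by decide),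
    X_comm (S := Strand) (a := Strand.two) (b := Strand.omega) (c := Strand.one) (d := Strand.beta) (by decide) (by decide) (by decide) (by decide) (by decide) (by decide),
    zero_add, add_zero]
  exact neg_mem (f3Sub.lie_mem my mx)

lemma h1ωx : ⁅X Strand one omega, X Strand one beta⁆ ∈ f3Sub := by
  rw [e_1w_w, neg_lie, add_lie, add_lie,
    X_comm (S := Strand) (by decide) (by decide) (by decide) (by decide) (by decide) (by decide),
    X_comm (S := Strand) (by decide) (by decide) (by decide) (by decide) (by decide) (by decide),
    zero_add, zero_add]
  exact neg_mem (f3Sub.lie_mem mzw mx)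

/- Bracket computations with the generator `X2β`. -/
lemma hαβy : ⁅X Strand alpha beta, X Strand two beta⁆ ∈ f3Sub := by
  rw [e_ab, neg_lie, add_lie, add_lie, lie_self]
  refine neg_mem (add_mem (add_mem (f3Sub.lie_mem mx my) (zero_mem _)) (f3Sub.lie_mem mz my))

lemma hα2y : ⁅X Strand alpha two, X Strand two beta⁆ ∈ f3Sub := by
  rw [e_a2, neg_lie, add_lie, add_lie,
    X_comm (S := Strand) (by decide) (by decide) (by decide) (by decide) (by decide) (by decide),
    X_comm (S := Strand) (a := Strand.alpha) (b := Strand.omega) (c := Strand.two) (d := Strand.beta) (by decide) (by decide) (by decide) (by decide) (by decide) (by decide),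
    zero_add, add_zero]
  exact neg_mem hαβy

lemma h12y : ⁅X Strand one two, X Strand two beta⁆ ∈ f3Sub := by
  rw [e_12_1, neg_lie, add_lie, add_lie,
    X_comm (S := Strand) (by decide) (by decide) (by decide) (by decide) (by decide) (by decide),
    X_comm (S := Strand) (a := Strand.one) (b := Strand.omega) (c := Strand.two) (d := Strand.beta) (by decide) (by decide) (by decide) (by decide) (by decide) (by decide),
    zero_add, add_zero]
  exact neg_mem (f3Sub.lie_mem mx my)

lemma h2ωy : ⁅X Strand two omega, X Strand two beta⁆ ∈ f3Sub := by
  rw [e_2w_w, neg_lie, add_lie, add_lie,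
    X_comm (S := Strand) (by decide) (by decide) (by decide) (by decide) (by decide) (by decide),
    X_comm (S := Strand) (by decide) (by decide) (by decide) (by decide) (by decide) (by decide),
    zero_add, zero_add]
  exact neg_mem (f3Sub.lie_mem mzw my)

/- Bracket computations with the generator `Xβω`. -/
lemma hαβz : ⁅X Strand alpha beta, X Strand beta omega⁆ ∈ f3Sub := by
  rw [e_ab, Xbw_eq, neg_lie, add_lie, add_lie, lie_self, add_zero]
  exact neg_mem (add_mem (f3Sub.lie_mem mx mzw) (f3Sub.lie_mem my mzw))

lemma h1ωz : ⁅X Strand one omega, X Strand beta omega⁆ ∈ f3Sub := by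
  rw [e_1w_1, neg_lie, add_lie, add_lie,
    X_comm (S := Strand) (by decide) (by decide) (by decide) (by decide) (by decide) (by decide),
    X_comm (S := Strand) (by decide) (by decide) (by decide) (by decide) (by decide) (by decide),
    zero_add, zero_add]
  exact neg_mem (f3Sub.lie_mem mx mzw)

lemma h2ωz : ⁅X Strand two omega, X Strand beta omega⁆ ∈ f3Sub := by
  rw [e_2w_2, neg_lie, add_lie, add_lie,
    X_comm (S := Strand) (by decide) (by decide) (by decide) (by decide) (by decide) (by decide),
    X_comm (S := Strand) (by decide) (by decide) (by decide) (by decide) (by decide) (by decide),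
    zero_add, zero_add]
  exact neg_mem (f3Sub.lie_mem my mzw)

lemma hαωz : ⁅X Strand alpha omega, X Strand beta omega⁆ ∈ f3Sub := by
  rw [e_aw, neg_lie, add_lie, add_lie,
    X_comm (S := Strand) (by decide) (by decide) (by decide) (by decide) (by decide) (by decide),
    X_comm (S := Strand) (by decide) (by decide) (by decide) (by decide) (by decide) (by decide),
    zero_add, zero_add]
  exact neg_mem hαβz

/- Symmetric versions. -/
lemma hβαx : ⁅X Strand beta alpha, X Strand one beta⁆ ∈ f3Sub := by
  rw [X_symm (S := Strand) beta alpha]; exact hαβx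
lemma h1αx : ⁅X Strand one alpha, X Strand one beta⁆ ∈ f3Sub := by
  rw [X_symm (S := Strand) one alpha]; exact hα1x
lemma h21x : ⁅X Strand two one, X Strand one beta⁆ ∈ f3Sub := by
  rw [X_symm (S := Strand) two one]; exact h12x
lemma hω1x : ⁅X Strand omega one, X Strand one beta⁆ ∈ f3Sub := by
  rw [X_symm (S := Strand) omega one]; exact h1ωx
lemma hβαy : ⁅X Strand beta alpha, X Strand two beta⁆ ∈ f3Sub := by
  rw [X_symm (S := Strand) beta alpha]; exact hαβy
lemma h2αy : ⁅X Strand two alpha, X Strand two beta⁆ ∈ f3Sub := by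
  rw [X_symm (S := Strand) two alpha]; exact hα2y
lemma h21y : ⁅X Strand two one, X Strand two beta⁆ ∈ f3Sub := by
  rw [X_symm (S := Strand) two one]; exact h12y
lemma hω2y : ⁅X Strand omega two, X Strand two beta⁆ ∈ f3Sub := by
  rw [X_symm (S := Strand) omega two]; exact h2ωy
lemma hβαz : ⁅X Strand beta alpha, X Strand beta omega⁆ ∈ f3Sub := by
  rw [X_symm (S := Strand) beta alpha]; exact hαβz
lemma hω1z : ⁅X Strand omega one, X Strand beta omega⁆ ∈ f3Sub := by
  rw [X_symm (S := Strand) omega one]; exact h1ωz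
lemma hω2z : ⁅X Strand omega two, X Strand beta omega⁆ ∈ f3Sub := by
  rw [X_symm (S := Strand) omega two]; exact h2ωz
lemma hωαz : ⁅X Strand omega alpha, X Strand beta omega⁆ ∈ f3Sub := by
  rw [X_symm (S := Strand) omega alpha]; exact hαωz

lemma brx (a b : Strand) : ⁅X Strand a b, X Strand one beta⁆ ∈ f3Sub := by
  rcases a <;> rcases b <;>
    first
      | (rw [X_diag, zero_lie]; exact zero_mem _)
      | (rw [X_comm (S := Strand) (by decide) (by decide) (by decide) (by decide) (by decide)
            (by decide)];
         exact zero_mem _)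
      | (exact f3Sub.lie_mem (by first
          | exact mx | exact mx' | exact my | exact my' | exact mzw | exact mzw') mx)
      | exact hαβx | exact hβαx | exact hα1x | exact h1αx | exact h12x | exact h21x
      | exact h1ωx | exact hω1x

lemma bry (a b : Strand) : ⁅X Strand a b, X Strand two beta⁆ ∈ f3Sub := by
  rcases a <;> rcases b <;>
    first
      | (rw [X_diag, zero_lie]; exact zero_mem _)
      | (rw [X_comm (S := Strand) (by decide) (by decide) (by decide) (by decide) (by decide)
            (by decide)];
         exact zero_mem _)
      | (exact f3Sub.lie_mem (by first
          | exact mx | exact mx' | exact my | exact my' | exact mzw | exact mzw') my)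
      | exact hαβy | exact hβαy | exact hα2y | exact h2αy | exact h12y | exact h21y
      | exact h2ωy | exact hω2y

lemma brz (a b : Strand) : ⁅X Strand a b, X Strand beta omega⁆ ∈ f3Sub := by
  rcases a <;> rcases b <;>
    first
      | (rw [X_diag, zero_lie]; exact zero_mem _)
      | (rw [X_comm (S := Strand) (by decide) (by decide) (by decide) (by decide) (by decide)
            (by decide)];
         exact zero_mem _)
      | (exact f3Sub.lie_mem (by first
          | exact mx | exact mx' | exact my | exact my' | exact mzw | exact mzw') mzw)
      | exact hαβz | exact hβαz | exact hαωz | exact hωαz | exact h1ωz | exact hω1z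
      | exact h2ωz | exact hω2z

lemma f3_bracket (g u : P5) (hu : u ∈ f3Sub) : ⁅g, u⁆ ∈ f3Sub := by
  have hgen : ∀ a b : Strand, ∀ v, v ∈ f3Sub → ⁅X Strand a b, v⁆ ∈ f3Sub := by
    intro a b v hv
    have key : v ∈ f3Sub ∧ ⁅X Strand a b, v⁆ ∈ f3Sub := by
      refine LieSubalgebra.lieSpan_induction (R := ℂ)
        (p := fun v _ => v ∈ f3Sub ∧ ⁅X Strand a b, v⁆ ∈ f3Sub) ?_ ?_ ?_ ?_ ?_ hv
      · intro w hw
        simp only [Set.mem_insert_iff, Set.mem_singleton_iff] at hw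
        rcases hw with rfl | rfl | rfl
        · exact ⟨mx, brx a b⟩
        · exact ⟨my, bry a b⟩
        · exact ⟨mz, Xbw_eq ▸ brz a b⟩
      · exact ⟨zero_mem _, by rw [lie_zero]; exact zero_mem _⟩
      · intro w w' _ _ hw hw'
        exact ⟨add_mem hw.1 hw'.1, by rw [lie_add]; exact add_mem hw.2 hw'.2⟩
      · intro r w _ hw
        exact ⟨f3Sub.smul_mem r hw.1, by rw [lie_smul]; exact f3Sub.smul_mem r hw.2⟩
      · intro w w' _ _ hw hw'
        refine ⟨f3Sub.lie_mem hw.1 hw'.1, ?_⟩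
        rw [leibniz_lie]
        exact add_mem (f3Sub.lie_mem hw.2 hw'.1) (f3Sub.lie_mem hw.1 hw'.2)
    exact key.2
  have hg := P_gen g
  refine (LieSubalgebra.lieSpan_induction (R := ℂ)
    (p := fun g _ => ∀ v ∈ f3Sub, ⁅g, v⁆ ∈ f3Sub) ?_ ?_ ?_ ?_ ?_ hg) u hu
  · rintro w ⟨a, b, rfl⟩
    exact fun v hv => hgen a b v hv
  · intro v hv; rw [zero_lie]; exact zero_mem _
  · intro w w' _ _ hw hw' v hv; rw [add_lie]; exact add_mem (hw v hv) (hw' v hv)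
  · intro r w _ hw v hv; rw [smul_lie]; exact f3Sub.smul_mem r (hw v hv)
  · intro w w' _ _ hw hw' v hv
    rw [lie_lie]
    exact sub_mem (hw _ (hw' v hv)) (hw' _ (hw v hv))

/-- `f₃` as a Lie ideal of `p₅`. -/
noncomputable def F3I : LieIdeal ℂ P5 :=
  { f3Sub.toSubmodule with lie_mem := fun {g u} hu => f3_bracket g u hu }

lemma mem_F3I {u : P5} : u ∈ F3I ↔ u ∈ f3Sub := Iff.rfl

end F3
section KerBeta
open Strand

lemma LieHom_zero {L L' : Type*} [LieRing L] [LieAlgebra ℂ L] [LieRing L'] [LieAlgebra ℂ L']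
    (g : L →ₗ⁅ℂ⁆ L') : g 0 = 0 := g.toLinearMap.map_zero

/-- The four distinguished elements of the label set `S ∖ {β}`. -/
noncomputable def sα : {s : Strand // s ≠ Strand.beta} := ⟨alpha, by decide⟩
noncomputable def s1 : {s : Strand // s ≠ Strand.beta} := ⟨one, by decide⟩
noncomputable def s2 : {s : Strand // s ≠ Strand.beta} := ⟨two, by decide⟩
noncomputable def sω : {s : Strand // s ≠ Strand.beta} := ⟨omega, by decide⟩

lemma strand4_univ : (Finset.univ : Finset {s : Strand // s ≠ Strand.beta})
    = {sα, s1, s2, sω} := by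
  decide

lemma strand4_sum {M : Type*} [AddCommMonoid M] (g : {s : Strand // s ≠ Strand.beta} → M) :
    ∑ s, g s = g sα + g s1 + g s2 + g sω := by
  show ∑ s ∈ (Finset.univ : Finset {s : Strand // s ≠ Strand.beta}), g s = _
  rw [strand4_univ]
  rw [Finset.sum_insert (by decide), Finset.sum_insert (by decide),
    Finset.sum_insert (by decide), Finset.sum_singleton]
  simp only [add_assoc]

lemma R4b (a : {s : Strand // s ≠ Strand.beta}) :
    X _ a sα + X _ a s1 + X _ a s2 + X _ a sω = 0 := by
  have h := X_sum_total (S := {s : Strand // s ≠ Strand.beta}) a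
  rwa [strand4_sum] at h

/-- The relation `X_{α1} + X_{α2} + X_{12} = 0` in `p₄` on `S ∖ {β}`. -/
lemma E4 : X _ sα s1 + X _ sα s2 + X _ s1 s2 = 0 := by
  have hα := R4b sα
  have h1 := R4b s1
  have h2 := R4b s2
  have hω := R4b sω
  rw [X_diag] at hα h1 h2 hω
  rw [X_symm s1 sα] at h1
  rw [X_symm s2 sα, X_symm s2 s1] at h2
  rw [X_symm sω sα, X_symm sω s1, X_symm sω s2] at hω
  simp only [zero_add, add_zero] at hα h1 h2 hω
  have key : X _ sα s1 + X _ sα s2 + X _ s1 s2 =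
      ((1 : ℂ)/2) • ((X _ sα s1 + X _ sα s2 + X _ sα sω) +
        (X _ sα s1 + X _ s1 s2 + X _ s1 sω) +
        (X _ sα s2 + X _ s1 s2 + X _ s2 sω)) -
      ((1 : ℂ)/2) • (X _ sα sω + X _ s1 sω + X _ s2 sω) := by
    module
  rw [hα, h1, h2, hω] at key
  simpa using key

/-- The canonical map `p₄(S ∖ {β}) → p₅ ⧸ f₃`. -/
noncomputable def sig4 : P4 Strand.beta →ₗ⁅ℂ⁆ (P5 ⧸ F3I) :=
  PHom (fun p => mkL F3I (X Strand p.1.1 p.2.1)) (pRel_check _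
    (fun a => by
      show mkL F3I (X Strand a.1 a.1) = 0
      rw [X_diag]; exact LieHom_zero _)
    (fun a b => by
      show mkL F3I (X Strand a.1 b.1) = mkL F3I (X Strand b.1 a.1)
      rw [X_symm (S := Strand) a.1 b.1])
    (fun a => by
      show ∑ b ∈ Finset.univ.filter (fun b => b ≠ a), mkL F3I (X Strand a.1 b.1) = 0
      rw [sum_split (fun b => mkL F3I (X Strand a.1 b.1)) a,
        sum_subtype_all (S := Strand) Strand.beta (fun s => mkL F3I (X Strand a.1 s)),
        ← LieHom_sum (mkL F3I) Finset.univ (fun s => X Strand a.1 s),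
        X_sum_total (S := Strand) a.1, LieHom_zero, X_diag, LieHom_zero]
      simp only [zero_sub, sub_zero, neg_eq_zero]
      rw [mkL_eq_zero]
      obtain ⟨a', ha'⟩ := a
      rcases a' with _ | _ | _ | _ | _
      · exact mab
      · exact mx
      · exact my
      · exact absurd rfl ha'
      · exact mzw')
    (fun a b c d hab hac had hbc hbd hcd => by
      show ⁅mkL F3I (X Strand a.1 b.1), mkL F3I (X Strand c.1 d.1)⁆ = 0
      rw [← LieHom.map_lie,
        X_comm (S := Strand) (Subtype.coe_ne_coe.2 hab) (Subtype.coe_ne_coe.2 hac)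
          (Subtype.coe_ne_coe.2 had) (Subtype.coe_ne_coe.2 hbc) (Subtype.coe_ne_coe.2 hbd)
          (Subtype.coe_ne_coe.2 hcd)]
      exact LieHom_zero _))

lemma sig4_X (a b : {s : Strand // s ≠ Strand.beta}) :
    sig4 (X _ a b) = mkL F3I (X Strand a.1 b.1) :=
  PHom_X _ _ a b

section PiBeta

variable {πβ : P5 →ₗ⁅ℂ⁆ P4 Strand.beta}
variable (hπβ0 : ∀ v : Strand, v ≠ Strand.beta → πβ (X Strand Strand.beta v) = 0)
variable (hπβ : ∀ (a b : Strand) (ha : a ≠ Strand.beta) (hb : b ≠ Strand.beta),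
      πβ (X Strand a b) = X _ ⟨a, ha⟩ ⟨b, hb⟩)

include hπβ0 hπβ in
lemma pib_f3_zero : ∀ u ∈ f3Sub, πβ u = 0 := by
  have hx : πβ (X Strand one beta) = 0 := by
    rw [X_symm (S := Strand) one beta]; exact hπβ0 one (by decide)
  have hy : πβ (X Strand two beta) = 0 := by
    rw [X_symm (S := Strand) two beta]; exact hπβ0 two (by decide)
  have hz : πβ Xbw = 0 := by
    rw [show Xbw = X Strand alpha one + X Strand alpha two + X Strand one two from rfl,
      map_add, map_add,
      hπβ alpha one (by decide) (by decide), hπβ alpha two (by decide) (by decide),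
      hπβ one two (by decide) (by decide)]
    exact E4
  intro u hu
  refine LieSubalgebra.lieSpan_induction (R := ℂ) (p := fun u _ => πβ u = 0) ?_ ?_ ?_ ?_ ?_ hu
  · intro w hw
    simp only [Set.mem_insert_iff, Set.mem_singleton_iff] at hw
    rcases hw with rfl | rfl | rfl
    · exact hx
    · exact hy
    · exact hz
  · exact LieHom_zero _
  · intro w w' _ _ hw hw'; rw [map_add, hw, hw', add_zero]
  · intro r w _ hw; rw [map_smul, hw, smul_zero]
  · intro w w' _ _ hw hw'; rw [LieHom.map_lie, hw, zero_lie]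

include hπβ0 hπβ in
lemma pib_ker : ∀ u : P5, πβ u = 0 ↔ u ∈ f3Sub := by
  have key : sig4.comp πβ = mkL F3I := by
    apply P_ext
    intro a b
    show sig4 (πβ (X Strand a b)) = mkL F3I (X Strand a b)
    by_cases ha : a = Strand.beta
    · subst ha
      by_cases hb : b = Strand.beta
      · subst hb
        rw [X_diag, LieHom_zero, LieHom_zero, LieHom_zero]
      · rw [hπβ0 b hb, LieHom_zero]
        symm
        rw [mkL_eq_zero]
        rcases b with _ | _ | _ | _ | _
        · exact mab'
        · exact mx'
        · exact my'
        · exact absurd rfl hb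
        · exact mzw
    · by_cases hb : b = Strand.beta
      · subst hb
        rw [X_symm (S := Strand) a Strand.beta, hπβ0 a ha, LieHom_zero]
        symm
        rw [mkL_eq_zero]
        rcases a with _ | _ | _ | _ | _
        · exact mab'
        · exact mx'
        · exact my'
        · exact absurd rfl ha
        · exact mzw
      · rw [hπβ a b ha hb, sig4_X]
  intro u
  constructor
  · intro hu
    have h2 := LieHom.congr_fun key u
    rw [LieHom.comp_apply, hu, LieHom_zero] at h2
    exact (mkL_eq_zero F3I).1 h2.symm
  · exact fun hu => pib_f3_zero hπβ0 hπβ u hu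

end PiBeta

end KerBeta
section FreeLemma

abbrev FF : Type := FreeLieAlgebra ℂ (Fin 3)
abbrev FF2 : Type := FreeLieAlgebra ℂ (Fin 2)

noncomputable def ga : FF := FreeLieAlgebra.of ℂ 0
noncomputable def gb : FF := FreeLieAlgebra.of ℂ 1
noncomputable def gc : FF := FreeLieAlgebra.of ℂ 2

noncomputable def Ia : LieIdeal ℂ FF := LieSubmodule.lieSpan ℂ FF {ga}
noncomputable def Ib : LieIdeal ℂ FF := LieSubmodule.lieSpan ℂ FF {gb}
noncomputable def KK : LieIdeal ℂ FF := ⁅Ia, Ib⁆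

noncomputable def sbm : FF →ₗ⁅ℂ⁆ FF := FreeLieAlgebra.lift ℂ ![ga, 0, gc]

noncomputable def wseq : ℕ → FF
  | 0 => ga
  | n + 1 => ⁅gc, wseq n⁆

noncomputable def A0 : LieSubalgebra ℂ FF := LieSubalgebra.lieSpan ℂ FF (Set.range wseq)

lemma sbm_ga : sbm ga = ga := by
  rw [sbm, ga, FreeLieAlgebra.lift_of_apply]
  rfl
lemma sbm_gb : sbm gb = 0 := by
  rw [sbm, gb, FreeLieAlgebra.lift_of_apply]
  rfl
lemma sbm_gc : sbm gc = gc := by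
  rw [sbm, gc, FreeLieAlgebra.lift_of_apply]
  rfl

lemma wIa (n : ℕ) : wseq n ∈ Ia := by
  induction n with
  | zero => exact LieSubmodule.subset_lieSpan rfl
  | succ n ih => exact Ia.lie_mem ih

lemma wfix (n : ℕ) : sbm (wseq n) = wseq n := by
  induction n with
  | zero => exact sbm_ga
  | succ n ih => rw [wseq, LieHom.map_lie, ih, sbm_gc]

lemma sbm_Ib {v : FF} (hv : v ∈ Ib) : sbm v = 0 := by
  have h : Ib ≤ sbm.ker := by
    apply LieSubmodule.lieSpan_le.2
    intro r hr
    rw [Set.mem_singleton_iff] at hr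
    subst hr
    exact LieHom.mem_ker.2 sbm_gb
  exact LieHom.mem_ker.1 (h hv)

lemma A0_fix {v : FF} (hv : v ∈ A0) : sbm v = v := by
  refine LieSubalgebra.lieSpan_induction (R := ℂ) (p := fun v _ => sbm v = v) ?_ ?_ ?_ ?_ ?_ hv
  · rintro w ⟨n, rfl⟩; exact wfix n
  · exact LieHom_zero _
  · intro w w' _ _ hw hw'; rw [map_add, hw, hw']
  · intro r w _ hw; rw [map_smul, hw]
  · intro w w' _ _ hw hw'; rw [LieHom.map_lie, hw, hw']

lemma bwK (n : ℕ) : ⁅gb, wseq n⁆ ∈ KK := by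
  rw [← lie_skew]
  exact neg_mem (LieSubmodule.lie_mem_lie (wIa n) (LieSubmodule.subset_lieSpan rfl))

noncomputable def Psub : Submodule ℂ FF := A0.toSubmodule ⊔ KK.toSubmodule

lemma A0_le_P {v : FF} (hv : v ∈ A0) : v ∈ Psub :=
  Submodule.mem_sup_left hv
lemma K_le_P {v : FF} (hv : v ∈ KK) : v ∈ Psub :=
  Submodule.mem_sup_right hv

lemma P_lie_closed {u v : FF} (hu : u ∈ Psub) (hv : v ∈ Psub) : ⁅u, v⁆ ∈ Psub := by
  obtain ⟨p, hp, q, hq, rfl⟩ := Submodule.mem_sup.1 hu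
  obtain ⟨r, hr, s, hs, rfl⟩ := Submodule.mem_sup.1 hv
  rw [add_lie, lie_add, lie_add]
  refine add_mem (add_mem ?_ ?_) (add_mem ?_ ?_)
  · exact A0_le_P (A0.lie_mem hp hr)
  · exact K_le_P (KK.lie_mem hs)
  · rw [← lie_skew]
    exact K_le_P (neg_mem (KK.lie_mem hq))
  · exact K_le_P (KK.lie_mem hs)

lemma A0_stable {v : FF} (hv : v ∈ A0) :
    v ∈ Psub ∧ ⁅ga, v⁆ ∈ Psub ∧ ⁅gb, v⁆ ∈ Psub ∧ ⁅gc, v⁆ ∈ Psub := by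
  refine LieSubalgebra.lieSpan_induction (R := ℂ)
    (p := fun v _ => v ∈ Psub ∧ ⁅ga, v⁆ ∈ Psub ∧ ⁅gb, v⁆ ∈ Psub ∧ ⁅gc, v⁆ ∈ Psub)
    ?_ ?_ ?_ ?_ ?_ hv
  · rintro w ⟨n, rfl⟩
    refine ⟨A0_le_P (LieSubalgebra.subset_lieSpan ⟨n, rfl⟩), ?_, ?_, ?_⟩
    · exact A0_le_P (A0.lie_mem (LieSubalgebra.subset_lieSpan ⟨0, rfl⟩)
        (LieSubalgebra.subset_lieSpan ⟨n, rfl⟩))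
    · exact K_le_P (bwK n)
    · exact A0_le_P (LieSubalgebra.subset_lieSpan ⟨n + 1, rfl⟩)
  · simp only [lie_zero]
    exact ⟨zero_mem _, zero_mem _, zero_mem _, zero_mem _⟩
  · intro w w' _ _ hw hw'
    simp only [lie_add]
    exact ⟨add_mem hw.1 hw'.1, add_mem hw.2.1 hw'.2.1, add_mem hw.2.2.1 hw'.2.2.1,
      add_mem hw.2.2.2 hw'.2.2.2⟩
  · intro r w _ hw
    simp only [lie_smul]
    exact ⟨Psub.smul_mem r hw.1, Psub.smul_mem r hw.2.1, Psub.smul_mem r hw.2.2.1,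
      Psub.smul_mem r hw.2.2.2⟩
  · intro w w' _ _ hw hw'
    refine ⟨P_lie_closed hw.1 hw'.1, ?_, ?_, ?_⟩
    · rw [leibniz_lie]
      exact add_mem (P_lie_closed hw.2.1 hw'.1) (P_lie_closed hw.1 hw'.2.1)
    · rw [leibniz_lie]
      exact add_mem (P_lie_closed hw.2.2.1 hw'.1) (P_lie_closed hw.1 hw'.2.2.1)
    · rw [leibniz_lie]
      exact add_mem (P_lie_closed hw.2.2.2 hw'.1) (P_lie_closed hw.1 hw'.2.2.2)

lemma gen_P (i : Fin 3) {v : FF} (hv : v ∈ Psub) : ⁅FreeLieAlgebra.of ℂ i, v⁆ ∈ Psub := by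
  obtain ⟨p, hp, q, hq, rfl⟩ := Submodule.mem_sup.1 hv
  rw [lie_add]
  refine add_mem ?_ (K_le_P (KK.lie_mem hq))
  fin_cases i
  · exact (A0_stable hp).2.1
  · exact (A0_stable hp).2.2.1
  · exact (A0_stable hp).2.2.2

lemma P_ideal_prop (x : FF) {m : FF} (hm : m ∈ Psub) : ⁅x, m⁆ ∈ Psub := by
  have hx := FL_gen (I := Fin 3) x
  refine (LieSubalgebra.lieSpan_induction (R := ℂ)
    (p := fun x _ => ∀ m ∈ Psub, ⁅x, m⁆ ∈ Psub) ?_ ?_ ?_ ?_ ?_ hx) m hm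
  · rintro w ⟨i, rfl⟩
    exact fun m hm => gen_P i hm
  · intro m hm; rw [zero_lie]; exact zero_mem _
  · intro w w' _ _ hw hw' m hm; rw [add_lie]; exact add_mem (hw m hm) (hw' m hm)
  · intro r w _ hw m hm; rw [smul_lie]; exact Psub.smul_mem r (hw m hm)
  · intro w w' _ _ hw hw' m hm
    rw [lie_lie]
    exact sub_mem (hw _ (hw' m hm)) (hw' _ (hw m hm))

noncomputable def Pideal : LieIdeal ℂ FF :=
  { Psub with lie_mem := fun {x m} hm => P_ideal_prop x hm }

lemma Ia_le_P : Ia ≤ Pideal := by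
  apply LieSubmodule.lieSpan_le.2
  intro r hr
  rw [Set.mem_singleton_iff] at hr
  subst hr
  exact A0_le_P (LieSubalgebra.subset_lieSpan ⟨0, rfl⟩)

/-- Key free Lie algebra fact: `⟨a⟩ ∩ ⟨b⟩ ⊆ ⁅⟨a⟩, ⟨b⟩⁆` in the free Lie algebra
on three generators. -/
lemma inter_le_bracket {u : FF} (hua : u ∈ Ia) (hub : u ∈ Ib) : u ∈ KK := by
  have hP : u ∈ Psub := Ia_le_P hua
  obtain ⟨p, hp, q, hq, rfl⟩ := Submodule.mem_sup.1 hP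
  have hqIb : q ∈ Ib := LieSubmodule.lie_le_right Ib Ia hq
  have hpIb : p ∈ Ib := by
    have : p = p + q - q := by abel
    rw [this]
    exact sub_mem hub hqIb
  have h0 : p = 0 := by
    rw [← A0_fix hp]
    exact sbm_Ib hpIb
  rw [h0, zero_add]
  exact hq

/- Kernels of the two projections. -/
noncomputable def pr1 : FF →ₗ⁅ℂ⁆ FF2 :=
  FreeLieAlgebra.lift ℂ ![0, FreeLieAlgebra.of ℂ 0, FreeLieAlgebra.of ℂ 1]
noncomputable def pr2 : FF →ₗ⁅ℂ⁆ FF2 :=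
  FreeLieAlgebra.lift ℂ ![FreeLieAlgebra.of ℂ 0, 0, FreeLieAlgebra.of ℂ 1]

lemma pr1_ga : pr1 ga = 0 := by rw [pr1, ga, FreeLieAlgebra.lift_of_apply]; rfl
lemma pr1_gb : pr1 gb = FreeLieAlgebra.of ℂ 0 := by
  rw [pr1, gb, FreeLieAlgebra.lift_of_apply]; rfl
lemma pr1_gc : pr1 gc = FreeLieAlgebra.of ℂ 1 := by
  rw [pr1, gc, FreeLieAlgebra.lift_of_apply]; rfl
lemma pr2_ga : pr2 ga = FreeLieAlgebra.of ℂ 0 := by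
  rw [pr2, ga, FreeLieAlgebra.lift_of_apply]
  rfl
lemma pr2_gb : pr2 gb = 0 := by rw [pr2, gb, FreeLieAlgebra.lift_of_apply]; rfl
lemma pr2_gc : pr2 gc = FreeLieAlgebra.of ℂ 1 := by
  rw [pr2, gc, FreeLieAlgebra.lift_of_apply]; rfl

lemma ker_pr1 {u : FF} (hu : pr1 u = 0) : u ∈ Ia := by
  let s1' : FF2 →ₗ⁅ℂ⁆ FF ⧸ Ia := FreeLieAlgebra.lift ℂ ![mkL Ia gb, mkL Ia gc]
  have key : s1'.comp pr1 = mkL Ia := by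
    apply FL_ext
    intro i
    fin_cases i
    · show s1' (pr1 ga) = mkL Ia ga
      rw [pr1_ga, LieHom_zero]
      symm
      rw [mkL_eq_zero]
      exact LieSubmodule.subset_lieSpan rfl
    · show s1' (pr1 gb) = mkL Ia gb
      rw [pr1_gb]
      show FreeLieAlgebra.lift ℂ ![mkL Ia gb, mkL Ia gc] (FreeLieAlgebra.of ℂ 0) = _
      rw [FreeLieAlgebra.lift_of_apply]
      rfl
    · show s1' (pr1 gc) = mkL Ia gc
      rw [pr1_gc]
      show FreeLieAlgebra.lift ℂ ![mkL Ia gb, mkL Ia gc] (FreeLieAlgebra.of ℂ 1) = _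
      rw [FreeLieAlgebra.lift_of_apply]
      rfl
  have h2 := LieHom.congr_fun key u
  rw [LieHom.comp_apply, hu, LieHom_zero] at h2
  exact (mkL_eq_zero Ia).1 h2.symm

lemma ker_pr2 {u : FF} (hu : pr2 u = 0) : u ∈ Ib := by
  let s2' : FF2 →ₗ⁅ℂ⁆ FF ⧸ Ib := FreeLieAlgebra.lift ℂ ![mkL Ib ga, mkL Ib gc]
  have key : s2'.comp pr2 = mkL Ib := by
    apply FL_ext
    intro i
    fin_cases i
    · show s2' (pr2 ga) = mkL Ib ga
      rw [pr2_ga]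
      show FreeLieAlgebra.lift ℂ ![mkL Ib ga, mkL Ib gc] (FreeLieAlgebra.of ℂ 0) = _
      rw [FreeLieAlgebra.lift_of_apply]
      rfl
    · show s2' (pr2 gb) = mkL Ib gb
      rw [pr2_gb, LieHom_zero]
      symm
      rw [mkL_eq_zero]
      exact LieSubmodule.subset_lieSpan rfl
    · show s2' (pr2 gc) = mkL Ib gc
      rw [pr2_gc]
      show FreeLieAlgebra.lift ℂ ![mkL Ib ga, mkL Ib gc] (FreeLieAlgebra.of ℂ 1) = _
      rw [FreeLieAlgebra.lift_of_apply]
      rfl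
  have h2 := LieHom.congr_fun key u
  rw [LieHom.comp_apply, hu, LieHom_zero] at h2
  exact (mkL_eq_zero Ib).1 h2.symm

end FreeLemma
section Tables
open Strand

noncomputable def phi : FF →ₗ⁅ℂ⁆ P5 :=
  FreeLieAlgebra.lift ℂ ![X Strand one beta, X Strand two beta, Xbw]

noncomputable def phi' : FF →ₗ⁅ℂ⁆ ↥f3Sub :=
  FreeLieAlgebra.lift ℂ ![X1b, X2b, ⟨Xbw, mz⟩]

lemma phi_ga : phi ga = X Strand one beta := by
  rw [phi, ga, FreeLieAlgebra.lift_of_apply]; rfl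
lemma phi_gb : phi gb = X Strand two beta := by
  rw [phi, gb, FreeLieAlgebra.lift_of_apply]; rfl
lemma phi_gc : phi gc = Xbw := by
  rw [phi, gc, FreeLieAlgebra.lift_of_apply]; rfl
lemma phi'_ga : phi' ga = X1b := by
  rw [phi', ga, FreeLieAlgebra.lift_of_apply]; rfl
lemma phi'_gb : phi' gb = X2b := by
  rw [phi', gb, FreeLieAlgebra.lift_of_apply]; rfl
lemma phi'_gc : phi' gc = ⟨Xbw, mz⟩ := by
  rw [phi', gc, FreeLieAlgebra.lift_of_apply]; rfl

lemma incl_phi' : f3Sub.incl.comp phi' = phi := by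
  apply FL_ext
  intro i
  fin_cases i
  · show f3Sub.incl (phi' ga) = phi ga
    rw [phi'_ga, phi_ga]; rfl
  · show f3Sub.incl (phi' gb) = phi gb
    rw [phi'_gb, phi_gb]; rfl
  · show f3Sub.incl (phi' gc) = phi gc
    rw [phi'_gc, phi_gc]; rfl

lemma val_phi' (w : FF) : (phi' w : P5) = phi w := LieHom.congr_fun incl_phi' w

lemma phi_onto {u : P5} (hu : u ∈ f3Sub) : ∃ w : FF, phi w = u := by
  have hle : f3Sub ≤ phi.range := by
    apply LieSubalgebra.lieSpan_le.2
    intro v hv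
    simp only [Set.mem_insert_iff, Set.mem_singleton_iff] at hv
    rcases hv with rfl | rfl | rfl
    · exact ⟨ga, phi_ga⟩
    · exact ⟨gb, phi_gb⟩
    · exact ⟨gc, phi_gc⟩
  exact hle hu

/-- Table giving the inverse `p₄(S∖{1}) → FF2`. -/
noncomputable def T1 : Strand → Strand → FF2
  | alpha, two => FreeLieAlgebra.of ℂ 1
  | two, alpha => FreeLieAlgebra.of ℂ 1
  | beta, omega => FreeLieAlgebra.of ℂ 1
  | omega, beta => FreeLieAlgebra.of ℂ 1
  | two, beta => FreeLieAlgebra.of ℂ 0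
  | beta, two => FreeLieAlgebra.of ℂ 0
  | alpha, omega => FreeLieAlgebra.of ℂ 0
  | omega, alpha => FreeLieAlgebra.of ℂ 0
  | alpha, beta => -FreeLieAlgebra.of ℂ 0 - FreeLieAlgebra.of ℂ 1
  | beta, alpha => -FreeLieAlgebra.of ℂ 0 - FreeLieAlgebra.of ℂ 1
  | two, omega => -FreeLieAlgebra.of ℂ 0 - FreeLieAlgebra.of ℂ 1
  | omega, two => -FreeLieAlgebra.of ℂ 0 - FreeLieAlgebra.of ℂ 1
  | _, _ => 0

/-- Table giving the inverse `p₄(S∖{2}) → FF2`. -/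
noncomputable def T2 : Strand → Strand → FF2
  | one, beta => FreeLieAlgebra.of ℂ 0
  | beta, one => FreeLieAlgebra.of ℂ 0
  | alpha, omega => FreeLieAlgebra.of ℂ 0
  | omega, alpha => FreeLieAlgebra.of ℂ 0
  | alpha, one => FreeLieAlgebra.of ℂ 1
  | one, alpha => FreeLieAlgebra.of ℂ 1
  | beta, omega => FreeLieAlgebra.of ℂ 1
  | omega, beta => FreeLieAlgebra.of ℂ 1
  | alpha, beta => -FreeLieAlgebra.of ℂ 0 - FreeLieAlgebra.of ℂ 1
  | beta, alpha => -FreeLieAlgebra.of ℂ 0 - FreeLieAlgebra.of ℂ 1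
  | one, omega => -FreeLieAlgebra.of ℂ 0 - FreeLieAlgebra.of ℂ 1
  | omega, one => -FreeLieAlgebra.of ℂ 0 - FreeLieAlgebra.of ℂ 1
  | _, _ => 0

noncomputable def inv1 : P4 Strand.one →ₗ⁅ℂ⁆ FF2 :=
  PHom (fun p => T1 p.1.1 p.2.1) (pRel_check _
    (fun a => by obtain ⟨a, _⟩ := a; rcases a <;> rfl)
    (fun a b => by
      obtain ⟨a, _⟩ := a; obtain ⟨b, _⟩ := b
      rcases a <;> rcases b <;> rfl)
    (fun a => by
      show ∑ b ∈ Finset.univ.filter (fun b => b ≠ a), T1 a.1 b.1 = 0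
      rw [sum_split (fun b => T1 a.1 b.1) a,
        sum_subtype_all (S := Strand) Strand.one (fun s => T1 a.1 s),
        strand_sum (fun s => T1 a.1 s)]
      obtain ⟨a, ha⟩ := a
      rcases a <;> first
        | exact absurd rfl ha
        | (simp only [T1]; abel))
    (fun a b c d hab hac had hbc hbd hcd => by
      show ⁅T1 a.1 b.1, T1 c.1 d.1⁆ = 0
      obtain ⟨a, ha⟩ := a; obtain ⟨b, hb⟩ := b; obtain ⟨c, hc⟩ := c; obtain ⟨d, hd⟩ := d
      replace hab : a ≠ b := fun h => hab (Subtype.ext h)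
      replace hac : a ≠ c := fun h => hac (Subtype.ext h)
      replace had : a ≠ d := fun h => had (Subtype.ext h)
      replace hbc : b ≠ c := fun h => hbc (Subtype.ext h)
      replace hbd : b ≠ d := fun h => hbd (Subtype.ext h)
      replace hcd : c ≠ d := fun h => hcd (Subtype.ext h)
      rcases a <;> rcases b <;> rcases c <;> rcases d <;>
        first
          | exact absurd rfl ha
          | exact absurd rfl hb
          | exact absurd rfl hc
          | exact absurd rfl hd
          | exact absurd rfl hab
          | exact absurd rfl hac
          | exact absurd rfl had
          | exact absurd rfl hbc
          | exact absurd rfl hbd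
          | exact absurd rfl hcd
          | exact lie_self _))

noncomputable def inv2 : P4 Strand.two →ₗ⁅ℂ⁆ FF2 :=
  PHom (fun p => T2 p.1.1 p.2.1) (pRel_check _
    (fun a => by obtain ⟨a, _⟩ := a; rcases a <;> rfl)
    (fun a b => by
      obtain ⟨a, _⟩ := a; obtain ⟨b, _⟩ := b
      rcases a <;> rcases b <;> rfl)
    (fun a => by
      show ∑ b ∈ Finset.univ.filter (fun b => b ≠ a), T2 a.1 b.1 = 0
      rw [sum_split (fun b => T2 a.1 b.1) a,
        sum_subtype_all (S := Strand) Strand.two (fun s => T2 a.1 s),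
        strand_sum (fun s => T2 a.1 s)]
      obtain ⟨a, ha⟩ := a
      rcases a <;> first
        | exact absurd rfl ha
        | (simp only [T2]; abel))
    (fun a b c d hab hac had hbc hbd hcd => by
      show ⁅T2 a.1 b.1, T2 c.1 d.1⁆ = 0
      obtain ⟨a, ha⟩ := a; obtain ⟨b, hb⟩ := b; obtain ⟨c, hc⟩ := c; obtain ⟨d, hd⟩ := d
      replace hab : a ≠ b := fun h => hab (Subtype.ext h)
      replace hac : a ≠ c := fun h => hac (Subtype.ext h)
      replace had : a ≠ d := fun h => had (Subtype.ext h)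
      replace hbc : b ≠ c := fun h => hbc (Subtype.ext h)
      replace hbd : b ≠ d := fun h => hbd (Subtype.ext h)
      replace hcd : c ≠ d := fun h => hcd (Subtype.ext h)
      rcases a <;> rcases b <;> rcases c <;> rcases d <;>
        first
          | exact absurd rfl ha
          | exact absurd rfl hb
          | exact absurd rfl hc
          | exact absurd rfl hd
          | exact absurd rfl hab
          | exact absurd rfl hac
          | exact absurd rfl had
          | exact absurd rfl hbc
          | exact absurd rfl hbd
          | exact absurd rfl hcd
          | exact lie_self _))

lemma inv1_X (a b : {s : Strand // s ≠ Strand.one}) : inv1 (X _ a b) = T1 a.1 b.1 :=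
  PHom_X _ _ a b

lemma inv2_X (a b : {s : Strand // s ≠ Strand.two}) : inv2 (X _ a b) = T2 a.1 b.1 :=
  PHom_X _ _ a b

end Tables
/-- `λ = ker(π₁) ∩ ker(π₂) ∩ ker(π_β)`, where for `t ∈ {1, 2, β}` the morphism
`π_t : p₅ → p₄` sends `X_{tv} ↦ 0` for `v ≠ t` and `X_{ab} ↦ X_{ab}` for `a, b ≠ t`. -/
theorem lam_eq_triple_kernel
    (π₁ : P5 →ₗ⁅ℂ⁆ P4 Strand.one) (π₂ : P5 →ₗ⁅ℂ⁆ P4 Strand.two)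
    (πβ : P5 →ₗ⁅ℂ⁆ P4 Strand.beta)
    (hπ₁0 : ∀ v : Strand, v ≠ Strand.one → π₁ (X Strand Strand.one v) = 0)
    (hπ₁ : ∀ (a b : Strand) (ha : a ≠ Strand.one) (hb : b ≠ Strand.one),
      π₁ (X Strand a b) = X _ ⟨a, ha⟩ ⟨b, hb⟩)
    (hπ₂0 : ∀ v : Strand, v ≠ Strand.two → π₂ (X Strand Strand.two v) = 0)
    (hπ₂ : ∀ (a b : Strand) (ha : a ≠ Strand.two) (hb : b ≠ Strand.two),
      π₂ (X Strand a b) = X _ ⟨a, ha⟩ ⟨b, hb⟩)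
    (hπβ0 : ∀ v : Strand, v ≠ Strand.beta → πβ (X Strand Strand.beta v) = 0)
    (hπβ : ∀ (a b : Strand) (ha : a ≠ Strand.beta) (hb : b ≠ Strand.beta),
      πβ (X Strand a b) = X _ ⟨a, ha⟩ ⟨b, hb⟩) :
    Subtype.val '' (lam : Set ↥f3Sub) =
      (π₁.ker : Set P5) ∩ (π₂.ker : Set P5) ∩ (πβ.ker : Set P5) := by
  have hI1 : (LieSubmodule.lieSpan ℂ ↥f3Sub {X1b} : LieIdeal ℂ ↥f3Sub) ≤
      (π₁.comp f3Sub.incl).ker := by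
    apply LieSubmodule.lieSpan_le.2
    intro r hr
    rw [Set.mem_singleton_iff] at hr
    subst hr
    refine LieHom.mem_ker.2 ?_
    show π₁ (X Strand Strand.one Strand.beta) = 0
    exact hπ₁0 Strand.beta (by decide)
  have hI2 : (LieSubmodule.lieSpan ℂ ↥f3Sub {X2b} : LieIdeal ℂ ↥f3Sub) ≤
      (π₂.comp f3Sub.incl).ker := by
    apply LieSubmodule.lieSpan_le.2
    intro r hr
    rw [Set.mem_singleton_iff] at hr
    subst hr
    refine LieHom.mem_ker.2 ?_
    show π₂ (X Strand Strand.two Strand.beta) = 0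
    exact hπ₂0 Strand.beta (by decide)
  have e1 : inv1.comp (π₁.comp phi) = pr1 := by
    apply FL_ext
    intro i
    fin_cases i
    · show inv1 (π₁ (phi ga)) = pr1 ga
      rw [phi_ga, hπ₁0 Strand.beta (by decide), LieHom_zero, pr1_ga]
    · show inv1 (π₁ (phi gb)) = pr1 gb
      rw [phi_gb, hπ₁ Strand.two Strand.beta (by decide) (by decide), inv1_X, pr1_gb]
      rfl
    · show inv1 (π₁ (phi gc)) = pr1 gc
      rw [phi_gc, pr1_gc]
      rw [show Xbw = X Strand Strand.alpha Strand.one + X Strand Strand.alpha Strand.two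
          + X Strand Strand.one Strand.two from rfl]
      rw [X_symm (S := Strand) Strand.alpha Strand.one]
      rw [map_add π₁, map_add π₁, hπ₁0 Strand.alpha (by decide),
        hπ₁ Strand.alpha Strand.two (by decide) (by decide), hπ₁0 Strand.two (by decide),
        zero_add, add_zero, inv1_X]
      rfl
  have e2 : inv2.comp (π₂.comp phi) = pr2 := by
    apply FL_ext
    intro i
    fin_cases i
    · show inv2 (π₂ (phi ga)) = pr2 ga
      rw [phi_ga, hπ₂ Strand.one Strand.beta (by decide) (by decide), inv2_X, pr2_ga]
      rfl
    · show inv2 (π₂ (phi gb)) = pr2 gb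
      rw [phi_gb, hπ₂0 Strand.beta (by decide), LieHom_zero, pr2_gb]
    · show inv2 (π₂ (phi gc)) = pr2 gc
      rw [phi_gc, pr2_gc]
      rw [show Xbw = X Strand Strand.alpha Strand.one + X Strand Strand.alpha Strand.two
          + X Strand Strand.one Strand.two from rfl]
      rw [X_symm (S := Strand) Strand.alpha Strand.two,
        X_symm (S := Strand) Strand.one Strand.two]
      rw [map_add π₂, map_add π₂, hπ₂0 Strand.alpha (by decide),
        hπ₂ Strand.alpha Strand.one (by decide) (by decide), hπ₂0 Strand.one (by decide),
        add_zero, add_zero, inv2_X]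
      rfl
  ext u
  constructor
  · rintro ⟨m, hm, rfl⟩
    have hm1 : m ∈ (LieSubmodule.lieSpan ℂ ↥f3Sub {X1b} : LieIdeal ℂ ↥f3Sub) :=
      LieSubmodule.lie_le_left _ _ hm
    have hm2 : m ∈ (LieSubmodule.lieSpan ℂ ↥f3Sub {X2b} : LieIdeal ℂ ↥f3Sub) :=
      LieSubmodule.lie_le_right _ _ hm
    refine ⟨⟨?_, ?_⟩, ?_⟩
    · exact LieHom.mem_ker.2 (LieHom.mem_ker.1 (hI1 hm1))
    · exact LieHom.mem_ker.2 (LieHom.mem_ker.1 (hI2 hm2))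
    · exact LieHom.mem_ker.2 (pib_f3_zero hπβ0 hπβ (↑m) m.2)
  · rintro ⟨⟨h1, h2⟩, h3⟩
    have hf3 : u ∈ f3Sub := (pib_ker hπβ0 hπβ u).1 (LieHom.mem_ker.1 h3)
    obtain ⟨w, rfl⟩ := phi_onto hf3
    have ha : w ∈ Ia := by
      apply ker_pr1
      have hc := LieHom.congr_fun e1 w
      rw [LieHom.comp_apply, LieHom.comp_apply, LieHom.mem_ker.1 h1, LieHom_zero] at hc
      exact hc.symm
    have hb : w ∈ Ib := by
      apply ker_pr2
      have hc := LieHom.congr_fun e2 w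
      rw [LieHom.comp_apply, LieHom.comp_apply, LieHom.mem_ker.1 h2, LieHom_zero] at hc
      exact hc.symm
    have hK : w ∈ KK := inter_le_bracket ha hb
    have hcomap1 : Ia ≤ LieIdeal.comap phi'
        (LieSubmodule.lieSpan ℂ ↥f3Sub {X1b} : LieIdeal ℂ ↥f3Sub) := by
      apply LieSubmodule.lieSpan_le.2
      intro r hr
      rw [Set.mem_singleton_iff] at hr
      subst hr
      exact LieIdeal.mem_comap.2 (by rw [phi'_ga]; exact LieSubmodule.subset_lieSpan rfl)
    have hcomap2 : Ib ≤ LieIdeal.comap phi'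
        (LieSubmodule.lieSpan ℂ ↥f3Sub {X2b} : LieIdeal ℂ ↥f3Sub) := by
      apply LieSubmodule.lieSpan_le.2
      intro r hr
      rw [Set.mem_singleton_iff] at hr
      subst hr
      exact LieIdeal.mem_comap.2 (by rw [phi'_gb]; exact LieSubmodule.subset_lieSpan rfl)
    have hcom : KK ≤ LieIdeal.comap phi' lam := by
      refine (LieSubmodule.lie_le_iff _ _ _).2 ?_
      intro x hx m hm
      rw [LieIdeal.mem_comap, LieHom.map_lie]
      exact LieSubmodule.lie_mem_lie (hcomap1 hx) (hcomap2 hm)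
    exact ⟨phi' w, hcom hK, val_phi' w⟩
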